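/- For every positive integer p and every natural number n, the number of noncrossing partitions of {1,…,pn} in which every block has exactly p elements equals the Fuss–Catalan number A_n^p = (1/(pn+1))·C(pn+1, n). -/

import Mathlib

/-- A finpartition of a finite set of naturals is noncrossing (planar) if there are no
elements `a < b < c < d` with `a, c` in one block and `b, d` in a different block. -/
def IsNoncrossing {s : Finset ℕ} (P : Finpartition s) : Prop :=
  ∀ a b c d : ℕ, a < b → b < c → c < d →
    ∀ B₁ ∈ P.parts, ∀ B₂ ∈ P.parts,
      a ∈ B₁ → c ∈ B₁ → b ∈ B₂ → d ∈ B₂ → B₁ = B₂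

open Finset

namespace FussCat



/-- number of elements of `A` below `k` -/
def cnt (A : Finset ℕ) (k : ℕ) : ℕ := (A.filter (· < k)).card

/-- number of elements of `A` in `[k, l)` -/
def seg (A : Finset ℕ) (k l : ℕ) : ℕ := (A.filter fun y => k ≤ y ∧ y < l).card

lemma cnt_mono (A : Finset ℕ) {k l : ℕ} (h : k ≤ l) : cnt A k ≤ cnt A l := by
  apply card_le_card
  exact monotone_filter_right _ fun x _ hx => lt_of_lt_of_le hx h

lemma cnt_add_seg (A : Finset ℕ) {k l : ℕ} (h : k ≤ l) :
    cnt A k + seg A k l = cnt A l := by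
  have hd : Disjoint (A.filter (· < k)) (A.filter fun y => k ≤ y ∧ y < l) := by
    simp only [disjoint_left, mem_filter]
    rintro a ⟨_, h1⟩ ⟨_, h2, _⟩
    omega
  have hu : A.filter (· < l) = A.filter (· < k) ∪ A.filter (fun y => k ≤ y ∧ y < l) := by
    ext y
    simp only [mem_union, mem_filter]
    constructor
    · rintro ⟨hy, hyl⟩
      rcases lt_or_ge y k with h' | h'
      · exact Or.inl ⟨hy, h'⟩
      · exact Or.inr ⟨hy, h', hyl⟩
    · rintro (⟨hy, h'⟩ | ⟨hy, h1, h2⟩)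
      · exact ⟨hy, by omega⟩
      · exact ⟨hy, h2⟩
  rw [cnt, cnt, seg, hu, card_union_of_disjoint hd]

lemma cnt_eq_card {A : Finset ℕ} {N k : ℕ} (hA : A ⊆ range N) (h : N ≤ k) :
    cnt A k = A.card := by
  rw [cnt, filter_true_of_mem]
  intro x hx
  have := mem_range.1 (hA hx)
  omega

lemma cnt_le (A : Finset ℕ) (k : ℕ) : cnt A k ≤ A.card := card_filter_le _ _

/-- rotation: read `A` starting at position `r` -/
def rot (N r : ℕ) (A : Finset ℕ) : Finset ℕ := (range N).filter fun x => (x + r) % N ∈ A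

lemma mem_rot {N r x : ℕ} {A : Finset ℕ} : x ∈ rot N r A ↔ x < N ∧ (x + r) % N ∈ A := by
  simp [rot]

lemma rot_subset (N r : ℕ) (A : Finset ℕ) : rot N r A ⊆ range N := filter_subset _ _

lemma rot_rot {N : ℕ} (hN : 0 < N) (r r' : ℕ) (A : Finset ℕ) :
    rot N r (rot N r' A) = rot N (r + r') A := by
  ext x
  simp only [mem_rot]
  constructor
  · rintro ⟨hx, -, h⟩
    refine ⟨hx, ?_⟩
    rwa [Nat.mod_add_mod, add_assoc] at h
  · rintro ⟨hx, h⟩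
    exact ⟨hx, Nat.mod_lt _ hN, by rwa [Nat.mod_add_mod, add_assoc]⟩

lemma rot_zero {N : ℕ} {A : Finset ℕ} (hA : A ⊆ range N) : rot N 0 A = A := by
  ext x
  simp only [mem_rot, add_zero]
  constructor
  · rintro ⟨hx, h⟩
    rwa [Nat.mod_eq_of_lt hx] at h
  · intro h
    have hx := mem_range.1 (hA h)
    exact ⟨hx, by rwa [Nat.mod_eq_of_lt hx]⟩

lemma rot_self {N : ℕ} {A : Finset ℕ} (hA : A ⊆ range N) : rot N N A = A := by
  ext x
  simp only [mem_rot, Nat.add_mod_right]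
  constructor
  · rintro ⟨hx, h⟩
    rwa [Nat.mod_eq_of_lt hx] at h
  · intro h
    have hx := mem_range.1 (hA h)
    exact ⟨hx, by rwa [Nat.mod_eq_of_lt hx]⟩

lemma card_rot {N : ℕ} (hN : 0 < N) {A : Finset ℕ} (hA : A ⊆ range N) (r : ℕ) :
    (rot N r A).card = A.card := by
  apply card_bij (i := fun x _ => (x + r) % N)
  · intro x hx
    exact (mem_rot.1 hx).2
  · intro x hx y hy h
    have hx' := (mem_rot.1 hx).1
    have hy' := (mem_rot.1 hy).1
    have h2 : x ≡ y [MOD N] := Nat.ModEq.add_right_cancel' r h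
    rwa [Nat.ModEq, Nat.mod_eq_of_lt hx', Nat.mod_eq_of_lt hy'] at h2
  · intro a ha
    have haN : a < N := mem_range.1 (hA ha)
    refine ⟨(a + (N - r % N)) % N, ?_, ?_⟩
    · rw [mem_rot]
      refine ⟨Nat.mod_lt _ hN, ?_⟩
      rw [Nat.mod_add_mod]
      have h4 : a + (N - r % N) + r = a + N * (1 + r / N) := by
        have h5 := Nat.div_add_mod r N
        have h6 : N * (1 + r / N) = N + N * (r / N) := by ring
        have h7 : r % N < N := Nat.mod_lt _ hN
        omega
      rwa [h4, Nat.add_mul_mod_self_left, Nat.mod_eq_of_lt haN]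
    · rw [Nat.mod_add_mod]
      have h4 : a + (N - r % N) + r = a + N * (1 + r / N) := by
        have h5 := Nat.div_add_mod r N
        have h6 : N * (1 + r / N) = N + N * (r / N) := by ring
        have h7 : r % N < N := Nat.mod_lt _ hN
        omega
      rw [h4, Nat.add_mul_mod_self_left, Nat.mod_eq_of_lt haN]

lemma aux_low {A : Finset ℕ} (r k : ℕ) :
    ((range k).filter fun x => x + r ∈ A).card = seg A r (r + k) := by
  apply card_bij' (i := fun x _ => x + r) (j := fun y _ => y - r)
  · intro x hx
    simp only [mem_filter, mem_range] at hx
    simp only [seg, mem_filter]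
    exact ⟨hx.2, by omega, by omega⟩
  · intro y hy
    simp only [seg, mem_filter] at hy
    simp only [mem_filter, mem_range]
    obtain ⟨hyA, hy1, hy2⟩ := hy
    refine ⟨by omega, ?_⟩
    have : y - r + r = y := by omega
    rwa [this]
  · intro x hx
    omega
  · intro y hy
    simp only [seg, mem_filter] at hy
    omega

lemma cnt_rot_low {N r k : ℕ} (hr : r ≤ N) (hk : k ≤ N - r) (A : Finset ℕ) :
    cnt (rot N r A) k = seg A r (r + k) := by
  have h1 : (rot N r A).filter (· < k) = (range k).filter fun x => x + r ∈ A := by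
    ext x
    simp only [mem_filter, mem_rot, mem_range]
    constructor
    · rintro ⟨⟨hxN, hxA⟩, hxk⟩
      refine ⟨hxk, ?_⟩
      rwa [Nat.mod_eq_of_lt (by omega)] at hxA
    · rintro ⟨hxk, hxA⟩
      exact ⟨⟨by omega, by rwa [Nat.mod_eq_of_lt (by omega)]⟩, hxk⟩
  rw [cnt, h1, aux_low]

lemma cnt_rot_high {N r k : ℕ} (hr : r ≤ N) (hk1 : N - r ≤ k) (hk2 : k ≤ N)
    (A : Finset ℕ) :
    cnt (rot N r A) k = seg A r N + cnt A (k - (N - r)) := by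
  have h1 : (rot N r A).filter (· < k) =
      ((range (N - r)).filter fun x => x + r ∈ A) ∪
        ((Ico (N - r) k).filter fun x => x + r - N ∈ A) := by
    ext x
    simp only [mem_filter, mem_rot, mem_range, mem_union, mem_Ico]
    constructor
    · rintro ⟨⟨hxN, hxA⟩, hxk⟩
      rcases lt_or_ge x (N - r) with h | h
      · left
        refine ⟨h, ?_⟩
        rwa [Nat.mod_eq_of_lt (by omega)] at hxA
      · right
        refine ⟨⟨h, hxk⟩, ?_⟩
        rw [Nat.mod_eq_sub_mod (by omega), Nat.mod_eq_of_lt (by omega)] at hxA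
        exact hxA
    · rintro (⟨hx, hxA⟩ | ⟨⟨hx1, hx2⟩, hxA⟩)
      · exact ⟨⟨by omega, by rwa [Nat.mod_eq_of_lt (by omega)]⟩, by omega⟩
      · refine ⟨⟨by omega, ?_⟩, hx2⟩
        rw [Nat.mod_eq_sub_mod (by omega), Nat.mod_eq_of_lt (by omega)]
        exact hxA
  have hd : Disjoint ((range (N - r)).filter fun x => x + r ∈ A)
      ((Ico (N - r) k).filter fun x => x + r - N ∈ A) := by
    simp only [disjoint_left, mem_filter, mem_range, mem_Ico]
    rintro a ⟨h1, _⟩ ⟨⟨h2, _⟩, _⟩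
    omega
  rw [cnt, h1, card_union_of_disjoint hd, aux_low]
  congr 1
  · congr 1
    omega
  · apply card_bij' (i := fun x _ => x + r - N) (j := fun y _ => y + (N - r))
    · intro x hx
      simp only [mem_filter, mem_Ico] at hx
      simp only [cnt, mem_filter]
      exact ⟨hx.2, by omega⟩
    · intro y hy
      simp only [cnt, mem_filter] at hy
      simp only [mem_filter, mem_Ico]
      refine ⟨⟨by omega, by omega⟩, ?_⟩
      have h5 : y + (N - r) + r - N = y := by omega
      rw [h5]
      exact hy.1
    · intro x hx
      simp only [mem_filter, mem_Ico] at hx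
      omega
    · intro y hy
      simp only [cnt, mem_filter] at hy
      omega

lemma cnt_zero (A : Finset ℕ) : cnt A 0 = 0 := by
  simp [cnt]

def Ok (p N : ℕ) (A : Finset ℕ) : Prop := ∀ k, k < N → k ≤ p * cnt A k

instance (p N : ℕ) : DecidablePred (Ok p N) := fun A => by
  unfold Ok; exact Nat.decidableBallLT N _

lemma ok_rot_iff {p n r : ℕ} {A : Finset ℕ} (hA : A ⊆ range (p * n + 1))
    (hAc : A.card = n) (hr1 : 1 ≤ r) (hrN : r < p * n + 1) :
    Ok p (p * n + 1) (rot (p * n + 1) r A) ↔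
      ((∀ j, r ≤ j → j ≤ p * n + 1 → p * cnt A r + j ≤ p * cnt A j + r) ∧
       (∀ j, 1 ≤ j → j < r → p * cnt A r + j + 1 ≤ p * cnt A j + r)) := by
  set N := p * n + 1 with hNdef
  have hcN : cnt A N = n := by rw [cnt_eq_card hA le_rfl, hAc]
  constructor
  · intro hOk
    constructor
    · intro j hrj hjN
      have h1 := hOk (j - r) (by omega)
      rw [cnt_rot_low (by omega) (by omega)] at h1
      have h2 : r + (j - r) = j := by omega
      rw [h2] at h1
      have h3 := cnt_add_seg A hrj
      have h4 : p * cnt A r + p * seg A r j = p * cnt A j := by rw [← Nat.mul_add, h3]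
      omega
    · intro j hj1 hjr
      have h1 := hOk (N - r + j) (by omega)
      rw [cnt_rot_high (by omega) (by omega) (by omega)] at h1
      have h2 : N - r + j - (N - r) = j := by omega
      rw [h2] at h1
      have h3 := cnt_add_seg A (show r ≤ N by omega)
      have h4 : p * cnt A r + p * seg A r N = p * n := by rw [← Nat.mul_add, h3, hcN]
      have h6 : p * (seg A r N + cnt A j) = p * seg A r N + p * cnt A j := Nat.mul_add _ _ _
      omega
  · rintro ⟨hC1, hC2⟩ k hkN
    rcases le_or_gt k (N - r) with hk | hk
    · rw [cnt_rot_low (by omega) hk]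
      have h3 := cnt_add_seg A (show r ≤ r + k by omega)
      have h4 : p * cnt A r + p * seg A r (r + k) = p * cnt A (r + k) := by
        rw [← Nat.mul_add, h3]
      have h1 := hC1 (r + k) (by omega) (by omega)
      omega
    · rw [cnt_rot_high (by omega) (by omega) (by omega)]
      have h1 := hC2 (k - (N - r)) (by omega) (by omega)
      have h3 := cnt_add_seg A (show r ≤ N by omega)
      have h4 : p * cnt A r + p * seg A r N = p * n := by rw [← Nat.mul_add, h3, hcN]
      have h6 : p * (seg A r N + cnt A (k - (N - r))) =
          p * seg A r N + p * cnt A (k - (N - r)) := Nat.mul_add _ _ _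
      omega

lemma good_rot_unique {p n : ℕ} {A : Finset ℕ} (hA : A ⊆ range (p * n + 1))
    (hAc : A.card = n) {r r' : ℕ} (hlt : r < r')
    (hr : r < p * n + 1 ∧ Ok p (p * n + 1) (rot (p * n + 1) r A))
    (hr' : r' < p * n + 1 ∧ Ok p (p * n + 1) (rot (p * n + 1) r' A)) : False := by
  set N := p * n + 1 with hNdef
  have hcN : cnt A N = n := by rw [cnt_eq_card hA le_rfl, hAc]
  have hC' := (ok_rot_iff hA hAc (show 1 ≤ r' by omega) hr'.1).mp hr'.2
  rcases Nat.eq_zero_or_pos r with rfl | hr0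
  · -- r = 0 : Ok A itself
    have hOkA : Ok p N A := by have h0 := hr.2; rwa [rot_zero hA] at h0
    have h1 := hC'.1 N (by omega) (by omega)
    have h2 := hOkA r' (by omega)
    have h3 : p * cnt A N = p * n := by rw [hcN]
    omega
  · have hC := (ok_rot_iff hA hAc (by omega) hr.1).mp hr.2
    have h1 := hC.1 r' (by omega) (by omega)
    have h2 := hC'.2 r (by omega) hlt
    omega

lemma existsUnique_good_rot {p n : ℕ} (hp : 0 < p) {A : Finset ℕ}
    (hA : A ⊆ range (p * n + 1)) (hAc : A.card = n) :
    ∃! r, r < p * n + 1 ∧ Ok p (p * n + 1) (rot (p * n + 1) r A) := by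
  set N := p * n + 1 with hNdef
  have hcN : cnt A N = n := by rw [cnt_eq_card hA le_rfl, hAc]
  set f : ℕ → ℤ := fun j => (p * cnt A j : ℤ) - j with hfdef
  have hfN : f N = -1 := by
    simp only [hfdef, hcN]
    push_cast
    omega
  have hf0 : f 0 = 0 := by simp [hfdef, cnt_zero]
  obtain ⟨r₁, hr₁mem, hr₁min⟩ :=
    exists_min_image (range (N + 1)) f ⟨0, mem_range.2 (by omega)⟩
  have hr₁N : r₁ ≤ N := by have := mem_range.1 hr₁mem; omega
  have hQex : ∃ r, r ≤ N ∧ f r ≤ f r₁ := ⟨r₁, hr₁N, le_rfl⟩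
  set r₀ := Nat.find hQex with hr₀def
  have hr₀N : r₀ ≤ N := (Nat.find_spec hQex).1
  have hr₀le : f r₀ ≤ f r₁ := (Nat.find_spec hQex).2
  have hr₀eq : f r₀ = f r₁ :=
    le_antisymm hr₀le (hr₁min r₀ (mem_range.2 (by omega)))
  have hmin : ∀ j, j ≤ N → f r₀ ≤ f j := fun j hj =>
    hr₀eq ▸ hr₁min j (mem_range.2 (by omega))
  have hstrict : ∀ j, j < r₀ → f r₀ < f j := by
    intro j hj
    have h1 := Nat.find_min hQex hj
    push_neg at h1
    have := h1 (by omega)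
    omega
  have hr₀1 : 1 ≤ r₀ := by
    rcases Nat.eq_zero_or_pos r₀ with h | h
    · exfalso
      have := hmin N le_rfl
      rw [h, hf0, hfN] at this
      omega
    · exact h
  have hexists : ∃ r, r < N ∧ Ok p N (rot N r A) := by
    rcases eq_or_lt_of_le hr₀N with heq | hlt
    · -- r₀ = N : all prefixes nonnegative, use r = 0
      refine ⟨0, by omega, ?_⟩
      rw [rot_zero hA]
      intro k hk
      have h1 := hstrict k (by omega)
      rw [heq, hfN] at h1
      simp only [hfdef] at h1
      omega
    · refine ⟨r₀, hlt, ?_⟩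
      rw [ok_rot_iff hA hAc hr₀1 hlt]
      constructor
      · intro j hj1 hj2
        have := hmin j hj2
        simp only [hfdef] at this
        omega
      · intro j hj1 hj2
        have := hstrict j hj2
        simp only [hfdef] at this
        omega
  obtain ⟨r, hr⟩ := hexists
  refine ⟨r, hr, ?_⟩
  intro y hy
  rcases lt_trichotomy y r with h | h | h
  · exact (good_rot_unique hA hAc h hy hr).elim
  · exact h
  · exact (good_rot_unique hA hAc h hr hy).elim

/-- the set of "ballot-type" subsets -/
def okSet (p n : ℕ) : Finset (Finset ℕ) :=
  ((range (p * n + 1)).powersetCard n).filter (Ok p (p * n + 1))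

lemma okSet_card_mul (p n : ℕ) (hp : 0 < p) :
    (okSet p n).card * (p * n + 1) = (p * n + 1).choose n := by
  set N := p * n + 1 with hNdef
  have hN : 0 < N := by omega
  set S := (range N).powersetCard n with hSdef
  have hScard : S.card = N.choose n := by
    rw [hSdef, card_powersetCard, card_range]
  have h1 : ∀ A ∈ S, ((range N).filter fun r => Ok p N (rot N r A)).card = 1 := by
    intro A hA
    obtain ⟨hAs, hAc⟩ := mem_powersetCard.1 hA
    obtain ⟨r, hr, hru⟩ := existsUnique_good_rot hp hAs hAc
    rw [card_eq_one]
    refine ⟨r, ?_⟩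
    ext y
    simp only [mem_filter, mem_range, mem_singleton]
    constructor
    · intro hy
      exact hru y hy
    · rintro rfl
      exact hr
  have h2 : S.card = ∑ A ∈ S, ((range N).filter fun r => Ok p N (rot N r A)).card := by
    rw [sum_congr rfl h1, sum_const, smul_eq_mul, mul_one]
  have h3 : ∀ r ∈ range N, (S.filter fun A => Ok p N (rot N r A)).card = (okSet p n).card := by
    intro r hrN
    have hrN' : r ≤ N := le_of_lt (mem_range.1 hrN)
    apply card_bij' (i := fun A _ => rot N r A) (j := fun B _ => rot N (N - r) B)
    · intro A hA
      rw [hSdef] at hA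
      simp only [mem_filter, mem_powersetCard] at hA
      obtain ⟨⟨hAs, hAc⟩, hAok⟩ := hA
      simp only [okSet, mem_filter, mem_powersetCard, ← hNdef]
      exact ⟨⟨rot_subset N r A, by rw [card_rot hN hAs]; exact hAc⟩, hAok⟩
    · intro B hB
      simp only [okSet, mem_filter, mem_powersetCard, ← hNdef] at hB
      obtain ⟨⟨hBs, hBc⟩, hBok⟩ := hB
      rw [hSdef]
      simp only [mem_filter, mem_powersetCard]
      refine ⟨⟨rot_subset N (N - r) B, by rw [card_rot hN hBs]; exact hBc⟩, ?_⟩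
      rw [rot_rot hN, show r + (N - r) = N by omega, rot_self hBs]
      exact hBok
    · intro A hA
      rw [hSdef] at hA
      simp only [mem_filter, mem_powersetCard] at hA
      rw [rot_rot hN, show N - r + r = N by omega, rot_self hA.1.1]
    · intro B hB
      simp only [okSet, mem_filter, mem_powersetCard, ← hNdef] at hB
      rw [rot_rot hN, show r + (N - r) = N by omega, rot_self hB.1.1]
  have h4 : S.card = N * (okSet p n).card := by
    rw [h2]
    have h5 : ∀ A ∈ S, ((range N).filter fun r => Ok p N (rot N r A)).card =
        ∑ r ∈ range N, if Ok p N (rot N r A) then 1 else 0 := fun A _ => card_filter _ _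
    rw [sum_congr rfl h5, sum_comm]
    have h6 : ∀ r ∈ range N, (∑ A ∈ S, if Ok p N (rot N r A) then 1 else 0) =
        (okSet p n).card := by
      intro r hr
      rw [← card_filter, h3 r hr]
    rw [sum_congr rfl h6, sum_const, card_range, smul_eq_mul]
  rw [← hScard, h4, Nat.mul_comm]


lemma cnt_def (A : Finset ℕ) (k : ℕ) : cnt A k = (A.filter (· < k)).card := rfl

/-- minimum of a finset of naturals, with junk value 0 -/
def mino (B : Finset ℕ) : ℕ := WithTop.untopD 0 B.min

lemma mino_eq_min' {B : Finset ℕ} (h : B.Nonempty) : mino B = B.min' h := by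
  rw [mino, ← Finset.coe_min' h]
  rfl

lemma mino_mem {B : Finset ℕ} (h : B.Nonempty) : mino B ∈ B := by
  rw [mino_eq_min' h]; exact B.min'_mem h

lemma mino_le {B : Finset ℕ} {y : ℕ} (hy : y ∈ B) : mino B ≤ y := by
  rw [mino_eq_min' ⟨y, hy⟩]; exact Finset.min'_le _ _ hy

lemma mino_eq {B : Finset ℕ} {m : ℕ} (hm : m ∈ B) (h : ∀ y ∈ B, m ≤ y) : mino B = m :=
  le_antisymm (mino_le hm) (h _ (mino_mem ⟨m, hm⟩))

/-- set of minima of the blocks of a finpartition -/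
def minima {s : Finset ℕ} (P : Finpartition s) : Finset ℕ := P.parts.image mino

lemma mino_injOn {s : Finset ℕ} (P : Finpartition s) : Set.InjOn mino P.parts := by
  intro B hB C hC h
  apply P.eq_of_mem_parts hB hC (mino_mem (P.nonempty_of_mem_parts hB))
  rw [h]
  exact mino_mem (P.nonempty_of_mem_parts hC)

lemma card_minima {s : Finset ℕ} (P : Finpartition s) : (minima P).card = P.parts.card :=
  card_image_of_injOn (mino_injOn P)

lemma minima_subset {s : Finset ℕ} (P : Finpartition s) : minima P ⊆ s := by
  intro x hx
  obtain ⟨B, hB, rfl⟩ := mem_image.1 hx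
  exact P.le hB (mino_mem (P.nonempty_of_mem_parts hB))

/-- the `p` smallest elements of `s` that are `≥ m` -/
def run (p : ℕ) (s : Finset ℕ) (m : ℕ) : Finset ℕ :=
  s.filter fun x => m ≤ x ∧ (s.filter fun y => m ≤ y ∧ y < x).card < p

lemma run_subset {p m : ℕ} {s : Finset ℕ} : run p s m ⊆ s := filter_subset _ _

lemma mem_run_self {p m : ℕ} {s : Finset ℕ} (hp : 0 < p) (hm : m ∈ s) : m ∈ run p s m := by
  simp only [run, mem_filter]
  refine ⟨hm, le_rfl, ?_⟩
  have h : (s.filter fun y => m ≤ y ∧ y < m) = ∅ :=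
    filter_false_of_mem (fun y _ h => by omega)
  rw [h]
  simpa using hp

lemma run_le {p m x : ℕ} {s : Finset ℕ} (hx : x ∈ run p s m) : m ≤ x :=
  (mem_filter.1 hx).2.1

lemma run_interval {p m x y : ℕ} {s : Finset ℕ} (hx : x ∈ run p s m) (hy : y ∈ s)
    (h1 : m ≤ y) (h2 : y ≤ x) : y ∈ run p s m := by
  simp only [run, mem_filter] at hx ⊢
  refine ⟨hy, h1, lt_of_le_of_lt ?_ hx.2.2⟩
  apply card_le_card
  apply monotone_filter_right
  intro z hz
  omega

lemma run_split {p m x y : ℕ} {s : Finset ℕ} (hx : x ∈ s) (h1 : m ≤ x)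
    (h2 : x ∉ run p s m) (hy : y ∈ run p s m) : y < x := by
  by_contra h
  push_neg at h
  exact h2 (run_interval hy hx h1 h)

lemma card_filter_rank_lt (t : Finset ℕ) : ∀ (k : ℕ), k ≤ t.card →
    (t.filter fun x => (t.filter (· < x)).card < k).card = k := by
  induction t using Finset.strongInduction with
  | _ t ih =>
    intro k hk
    rcases t.eq_empty_or_nonempty with rfl | hne
    · simp only [card_empty, Nat.le_zero] at hk
      simp [hk]
    · have hMt : t.max' hne ∈ t := t.max'_mem hne
      set M := t.max' hne with hM
      set t' := t.erase M with ht'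
      have hct' : t'.card = t.card - 1 := card_erase_of_mem hMt
      have hcpos : 0 < t.card := card_pos.2 hne
      have hrank_lt : ∀ x ∈ t', (t.filter (· < x)).card = (t'.filter (· < x)).card := by
        intro x hx
        congr 1
        ext y
        simp only [ht', mem_filter, mem_erase]
        constructor
        · rintro ⟨hyt, hyx⟩
          refine ⟨⟨?_, hyt⟩, hyx⟩
          rintro rfl
          have hxM : x ≤ M := t.le_max' x (mem_of_mem_erase hx)
          have hxne : x ≠ M := (mem_erase.1 hx).1
          omega
        · rintro ⟨⟨_, hyt⟩, hyx⟩
          exact ⟨hyt, hyx⟩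
      have hrankM : (t.filter (· < M)).card = t.card - 1 := by
        have h : t.filter (· < M) = t' := by
          ext y
          simp only [ht', mem_filter, mem_erase]
          constructor
          · rintro ⟨hyt, hyM⟩
            exact ⟨by omega, hyt⟩
          · rintro ⟨hyne, hyt⟩
            have := t.le_max' y hyt
            exact ⟨hyt, by omega⟩
        rw [h, hct']
      rcases eq_or_lt_of_le hk with heq | hlt
      · rw [filter_true_of_mem, heq]
        intro x hx
        have hsub : t.filter (· < x) ⊆ t.erase x := by
          intro y hy
          simp only [mem_filter] at hy
          simp only [mem_erase]
          exact ⟨by omega, hy.1⟩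
        have h2 := card_le_card hsub
        rw [card_erase_of_mem hx] at h2
        omega
      · have hk' : k ≤ t'.card := by omega
        have heq : t.filter (fun x => (t.filter (· < x)).card < k) =
            t'.filter fun x => (t'.filter (· < x)).card < k := by
          ext x
          simp only [mem_filter]
          constructor
          · rintro ⟨hxt, hxr⟩
            have hxt' : x ∈ t' := by
              rw [ht', mem_erase]
              refine ⟨?_, hxt⟩
              rintro rfl
              rw [hrankM] at hxr
              omega
            rw [← hrank_lt x hxt']
            exact ⟨hxt', hxr⟩
          · rintro ⟨hxt', hxr⟩
            rw [← hrank_lt x hxt'] at hxr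
            exact ⟨mem_of_mem_erase hxt', hxr⟩
        rw [heq, ih t' (erase_ssubset hMt) k hk']

lemma card_run {p m : ℕ} {s : Finset ℕ} (h : p ≤ (s.filter (m ≤ ·)).card) :
    (run p s m).card = p := by
  have hrw : run p s m = (s.filter (m ≤ ·)).filter
      fun x => ((s.filter (m ≤ ·)).filter (· < x)).card < p := by
    simp only [filter_filter, run]
  rw [hrw, card_filter_rank_lt _ p h]

lemma part_eq_run {p : ℕ} {s : Finset ℕ} {P : Finpartition s} (hp : 0 < p)
    (hNC : IsNoncrossing P) (hcards : ∀ B ∈ P.parts, B.card = p) {m : ℕ}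
    (hm : m ∈ minima P) (hmax : ∀ x ∈ minima P, x ≤ m) :
    P.part m = run p s m := by
  have hms : m ∈ s := minima_subset P hm
  set B := P.part m with hBdef
  have hB : B ∈ P.parts := P.part_mem.2 hms
  have hmB : m ∈ B := P.mem_part hms
  have hBcard : B.card = p := hcards B hB
  obtain ⟨C, hC, hCm⟩ := mem_image.1 hm
  have hCB : C = B :=
    P.eq_of_mem_parts hC hB (hCm ▸ mino_mem (P.nonempty_of_mem_parts hC)) hmB
  have hminB : ∀ y ∈ B, m ≤ y := by
    intro y hy
    rw [← hCm, hCB]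
    exact mino_le hy
  have hsub : run p s m ⊆ B := by
    intro x hx
    have hxs : x ∈ s := run_subset hx
    have hmx : m ≤ x := run_le hx
    rcases eq_or_lt_of_le hmx with rfl | hmx'
    · exact hmB
    by_contra hxB
    set B'' := P.part x with hB''def
    have hB'' : B'' ∈ P.parts := P.part_mem.2 hxs
    have hxB'' : x ∈ B'' := P.mem_part hxs
    have hne : B'' ≠ B := fun h => hxB (h ▸ hxB'')
    set m'' := mino B'' with hm''def
    have hm''B : m'' ∈ B'' := mino_mem (P.nonempty_of_mem_parts hB'')
    have hm''min : m'' ∈ minima P := mem_image_of_mem _ hB''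
    have hm''lt : m'' < m := by
      have h1 : m'' ≤ m := hmax _ hm''min
      rcases eq_or_lt_of_le h1 with h2 | h2
      · exfalso
        apply hne
        apply P.eq_of_mem_parts hB'' hB _ hmB
        rw [← h2] at hmB ⊢
        exact hm''B
      · exact h2
    have hy : ∃ y ∈ B, x < y := by
      by_contra hcon
      push_neg at hcon
      have hBsub : B ⊆ s.filter fun y => m ≤ y ∧ y < x := by
        intro y hyB
        simp only [mem_filter]
        have hyx := hcon y hyB
        have hyne : y ≠ x := fun h => hxB (h ▸ hyB)
        exact ⟨P.le hB hyB, hminB y hyB, by omega⟩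
      have h2 := card_le_card hBsub
      have h3 : (s.filter fun y => m ≤ y ∧ y < x).card < p := (mem_filter.1 hx).2.2
      omega
    obtain ⟨y, hyB, hxy⟩ := hy
    exact hne (hNC m'' m x y hm''lt hmx' hxy B'' hB'' B hB hm''B hxB'' hmB hyB)
  have hBsub' : B ⊆ s.filter (m ≤ ·) := fun y hy =>
    mem_filter.2 ⟨P.le hB hy, hminB y hy⟩
  have hcard_run : (run p s m).card = p := by
    apply card_run
    have := card_le_card hBsub'
    omega
  exact (eq_of_subset_of_card_le hsub (by omega)).symm

lemma parts_avoid {s : Finset ℕ} (P : Finpartition s) {B : Finset ℕ} (hB : B ∈ P.parts) :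
    (P.avoid B).parts = P.parts.erase B := by
  ext C
  rw [Finpartition.mem_avoid, mem_erase]
  constructor
  · rintro ⟨D, hD, hDB, rfl⟩
    have hne : D ≠ B := by
      rintro rfl
      exact hDB le_rfl
    have hdisj : Disjoint D B := P.disjoint hD hB hne
    rw [hdisj.sdiff_eq_left]
    exact ⟨hne, hD⟩
  · rintro ⟨hne, hC⟩
    refine ⟨C, hC, ?_, (P.disjoint hC hB hne).sdiff_eq_left⟩
    intro hle
    obtain ⟨x, hx⟩ := P.nonempty_of_mem_parts hC
    exact (disjoint_left.1 (P.disjoint hC hB hne) hx) (hle hx)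

lemma minima_avoid {s : Finset ℕ} (P : Finpartition s) {B : Finset ℕ} (hB : B ∈ P.parts) :
    minima (P.avoid B) = (minima P).erase (mino B) := by
  rw [minima, parts_avoid P hB]
  ext x
  constructor
  · intro hx
    obtain ⟨C, hC, rfl⟩ := mem_image.1 hx
    have hCp := mem_of_mem_erase hC
    have hne := (mem_erase.1 hC).1
    exact mem_erase.2 ⟨fun h => hne (mino_injOn P hCp hB h), mem_image_of_mem _ hCp⟩
  · intro hx
    have hne := (mem_erase.1 hx).1
    obtain ⟨C, hC, rfl⟩ := mem_image.1 (mem_of_mem_erase hx)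
    refine mem_image_of_mem _ (mem_erase.2 ⟨?_, hC⟩)
    rintro rfl
    exact hne rfl


lemma isNoncrossing_avoid {s : Finset ℕ} {P : Finpartition s} (h : IsNoncrossing P)
    {B : Finset ℕ} (hB : B ∈ P.parts) : IsNoncrossing (P.avoid B) := by
  intro a b c d h1 h2 h3 B₁ hB₁ B₂ hB₂ ha hc hb hd
  rw [parts_avoid P hB] at hB₁ hB₂
  exact h a b c d h1 h2 h3 B₁ (mem_of_mem_erase hB₁) B₂ (mem_of_mem_erase hB₂) ha hc hb hd

lemma cards_avoid {s : Finset ℕ} {P : Finpartition s} {p : ℕ}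
    (h : ∀ C ∈ P.parts, C.card = p) {B : Finset ℕ} (hB : B ∈ P.parts) :
    ∀ C ∈ (P.avoid B).parts, C.card = p := by
  intro C hC
  rw [parts_avoid P hB] at hC
  exact h C (mem_of_mem_erase hC)

lemma eq_of_minima_eq {p : ℕ} (hp : 0 < p) :
    ∀ (N : ℕ) (s : Finset ℕ), s.card ≤ N → ∀ (P Q : Finpartition s),
      IsNoncrossing P → IsNoncrossing Q → (∀ B ∈ P.parts, B.card = p) →
      (∀ B ∈ Q.parts, B.card = p) → minima P = minima Q → P = Q := by
  intro N
  induction N with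
  | zero =>
    intro s hs P Q _ _ _ _ _
    have hsE : s = ∅ := card_eq_zero.1 (by omega)
    subst hsE
    exact Subsingleton.elim (α := Finpartition (⊥ : Finset ℕ)) P Q
  | succ N ih =>
    intro s hs P Q hPnc hQnc hPc hQc hmin
    rcases s.eq_empty_or_nonempty with rfl | hne
    · exact Subsingleton.elim (α := Finpartition (⊥ : Finset ℕ)) P Q
    · have hmne : (minima P).Nonempty := by
        obtain ⟨x, hx⟩ := hne
        obtain ⟨B, hB, hxB⟩ := P.exists_mem hx
        exact ⟨mino B, mem_image_of_mem _ hB⟩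
      set m := (minima P).max' hmne with hm
      have hmP : m ∈ minima P := (minima P).max'_mem hmne
      have hmaxP : ∀ x ∈ minima P, x ≤ m := fun x hx => (minima P).le_max' x hx
      have hmQ : m ∈ minima Q := hmin ▸ hmP
      have hmaxQ : ∀ x ∈ minima Q, x ≤ m := by rw [← hmin]; exact hmaxP
      have hPr := part_eq_run hp hPnc hPc hmP hmaxP
      have hQr := part_eq_run hp hQnc hQc hmQ hmaxQ
      set B := run p s m with hBdef
      have hms : m ∈ s := minima_subset P hmP
      have hBP : B ∈ P.parts := hPr ▸ P.part_mem.2 hms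
      have hBQ : B ∈ Q.parts := hQr ▸ Q.part_mem.2 hms
      have hBs : B ⊆ s := run_subset
      have hBne : B.Nonempty := ⟨m, mem_run_self hp hms⟩
      have hcard : (s \ B).card ≤ N := by
        have h1 : (s \ B).card = s.card - B.card := card_sdiff_of_subset hBs
        have h2 : 0 < B.card := card_pos.2 hBne
        omega
      have hPQ' : P.avoid B = Q.avoid B := by
        apply ih (s \ B) hcard (P.avoid B) (Q.avoid B)
          (isNoncrossing_avoid hPnc hBP) (isNoncrossing_avoid hQnc hBQ)
          (cards_avoid hPc hBP) (cards_avoid hQc hBQ)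
        rw [minima_avoid P hBP, minima_avoid Q hBQ, hmin]
      have hparts : P.parts.erase B = Q.parts.erase B := by
        rw [← parts_avoid P hBP, ← parts_avoid Q hBQ, hPQ']
      apply Finpartition.ext
      rw [← insert_erase hBP, ← insert_erase hBQ, hparts]

lemma minima_valid {p : ℕ} {s : Finset ℕ} (P : Finpartition s)
    (hPc : ∀ B ∈ P.parts, B.card = p) :
    s.card = p * (minima P).card ∧
      ∀ x, (s.filter (· < x)).card ≤ p * ((minima P).filter (· < x)).card := by
  constructor
  · rw [card_minima, ← P.sum_card_parts, sum_congr rfl hPc, sum_const, smul_eq_mul, mul_comm]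
  · intro x
    classical
    have hsplit : s.filter (· < x) = P.parts.biUnion fun B => B.filter (· < x) := by
      ext y
      simp only [mem_filter, mem_biUnion]
      constructor
      · rintro ⟨hy, hyx⟩
        obtain ⟨B, hB, hyB⟩ := P.exists_mem hy
        exact ⟨B, hB, hyB, hyx⟩
      · rintro ⟨B, hB, hyB, hyx⟩
        exact ⟨P.le hB hyB, hyx⟩
    have hdisj : ∀ B ∈ P.parts, ∀ C ∈ P.parts, B ≠ C →
        Disjoint (B.filter (· < x)) (C.filter (· < x)) := fun B hB C hC hne =>
      disjoint_filter_filter (P.disjoint hB hC hne)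
    rw [hsplit, card_biUnion hdisj]
    have hzero : ∀ B ∈ P.parts.filter (fun B => ¬ mino B < x), (B.filter (· < x)).card = 0 := by
      intro B hB
      rw [card_eq_zero]
      apply filter_false_of_mem
      intro y hy hyx
      have h1 := mino_le hy
      have h2 := (mem_filter.1 hB).2
      omega
    have hsum : ∑ B ∈ P.parts, (B.filter (· < x)).card
        = ∑ B ∈ P.parts.filter (fun B => mino B < x), (B.filter (· < x)).card := by
      rw [← sum_filter_add_sum_filter_not P.parts (fun B => mino B < x), sum_eq_zero hzero,
        add_zero]
    have hbound : ∑ B ∈ P.parts.filter (fun B => mino B < x), (B.filter (· < x)).card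
        ≤ (P.parts.filter (fun B => mino B < x)).card * p := by
      have h1 : ∑ B ∈ P.parts.filter (fun B => mino B < x), (B.filter (· < x)).card
          ≤ ∑ _B ∈ P.parts.filter (fun B => mino B < x), p :=
        sum_le_sum fun B hB => by
          rw [← hPc B (mem_filter.1 hB).1]
          exact card_filter_le _ _
      rwa [sum_const, smul_eq_mul] at h1
    have hcardeq : (P.parts.filter fun B => mino B < x).card
        = ((minima P).filter (· < x)).card := by
      rw [minima, filter_image, card_image_of_injOn ((mino_injOn P).mono ?_)]
      exact_mod_cast coe_subset.2 (filter_subset _ _)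
    have hfin : (P.parts.filter fun B => mino B < x).card * p
        = p * ((minima P).filter (· < x)).card := by
      rw [hcardeq, mul_comm]
    omega

lemma parts_of_empty (P : Finpartition (∅ : Finset ℕ)) : P.parts = ∅ :=
  Finpartition.parts_eq_empty_iff.2 rfl

lemma exists_partition {p : ℕ} (hp : 0 < p) :
    ∀ (N : ℕ) (s M : Finset ℕ), M.card ≤ N → M ⊆ s → s.card = p * M.card →
      (∀ x, (s.filter (· < x)).card ≤ p * (M.filter (· < x)).card) →
      ∃ P : Finpartition s, IsNoncrossing P ∧ (∀ B ∈ P.parts, B.card = p) ∧ minima P = M := by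
  have base : ∀ (s : Finset ℕ), s.card = 0 →
      ∃ P : Finpartition s, IsNoncrossing P ∧ (∀ B ∈ P.parts, B.card = p) ∧ minima P = ∅ := by
    intro s hs
    have hsE : s = ∅ := card_eq_zero.1 hs
    subst hsE
    refine ⟨(Finpartition.empty (Finset ℕ) : Finpartition (⊥ : Finset ℕ)), ?_, ?_, ?_⟩
    · intro a b c d _ _ _ B₁ hB₁ B₂ hB₂ _ _ _ _
      rw [parts_of_empty] at hB₁
      exact absurd hB₁ (notMem_empty _)
    · intro B hB
      rw [parts_of_empty] at hB
      exact absurd hB (notMem_empty _)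
    · rw [minima, parts_of_empty, image_empty]
  intro N
  induction N with
  | zero =>
    intro s M hMc hMs hsc hx
    have hM : M = ∅ := card_eq_zero.1 (by omega)
    subst hM
    simp only [card_empty, Nat.mul_zero] at hsc
    exact base s hsc
  | succ N ih =>
    intro s M hMc hMs hsc hx
    rcases M.eq_empty_or_nonempty with rfl | hMne
    · simp only [card_empty, Nat.mul_zero] at hsc
      exact base s hsc
    · set m := M.max' hMne with hm
      have hmM : m ∈ M := M.max'_mem hMne
      have hms : m ∈ s := hMs hmM
      have hMcpos : 0 < M.card := card_pos.2 hMne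
      obtain ⟨cc, hcc⟩ : ∃ cc, M.card = cc + 1 := ⟨M.card - 1, by omega⟩
      have hpm : p * M.card = p * cc + p := by rw [hcc]; ring
      have hMfm : M.filter (· < m) = M.erase m := by
        ext y
        simp only [mem_filter, mem_erase]
        constructor
        · rintro ⟨h1, h2⟩
          exact ⟨by omega, h1⟩
        · rintro ⟨h1, h2⟩
          have := M.le_max' y h2
          exact ⟨h2, by omega⟩
      have hMfmc : (M.filter (· < m)).card = cc := by
        rw [hMfm, card_erase_of_mem hmM]
        omega
      have h1 : (s.filter (· < m)).card ≤ p * cc := by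
        have h := hx m
        rw [hMfmc] at h
        exact h
      have hfsplit : (s.filter (· < m)).card + (s.filter (m ≤ ·)).card = s.card := by
        have hneg : s.filter (fun y => ¬ y < m) = s.filter (m ≤ ·) := by
          apply filter_congr
          intro y _
          simp [Nat.not_lt]
        rw [← hneg, card_filter_add_card_filter_not]
      have h2 : p ≤ (s.filter (m ≤ ·)).card := by omega
      set B := run p s m with hB
      have hBs : B ⊆ s := run_subset
      have hBc : B.card = p := card_run h2
      have hmB : m ∈ B := mem_run_self hp hms
      have hBmin : ∀ y ∈ B, m ≤ y := fun y hy => run_le hy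
      set s' := s \ B with hs'
      set M' := M.erase m with hM'
      have hM'c : M'.card = cc := by
        rw [hM', card_erase_of_mem hmM]
        omega
      have hM's' : M' ⊆ s' := by
        intro y hy
        have hyM := mem_of_mem_erase hy
        have hyne := (mem_erase.1 hy).1
        rw [hs', mem_sdiff]
        refine ⟨hMs hyM, ?_⟩
        intro hyB
        have h3 := run_le hyB
        have h4 := M.le_max' y hyM
        rw [hM', mem_erase] at hy
        omega
      have hs'c : s'.card = p * M'.card := by
        rw [hs', card_sdiff_of_subset hBs, hM'c, hBc]
        omega
      have hx' : ∀ x, (s'.filter (· < x)).card ≤ p * (M'.filter (· < x)).card := by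
        intro x
        have hsub1 : s'.filter (· < x) = (s.filter (· < x)) \ (B.filter (· < x)) := by
          rw [hs']
          ext y
          simp only [mem_sdiff, mem_filter]
          tauto
        have hBsubs : B.filter (· < x) ⊆ s.filter (· < x) := filter_subset_filter _ hBs
        have hcard1 : (s'.filter (· < x)).card
            = (s.filter (· < x)).card - (B.filter (· < x)).card := by
          rw [hsub1, card_sdiff_of_subset hBsubs]
        rcases le_or_gt x m with hxm | hmx
        · have hBf : B.filter (· < x) = ∅ := by
            apply filter_false_of_mem
            intro y hy hyx
            have := run_le hy
            omega
          have hMf : M'.filter (· < x) = M.filter (· < x) := by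
            rw [hM']
            ext y
            simp only [mem_filter, mem_erase]
            constructor
            · rintro ⟨⟨h3, h4⟩, h5⟩
              exact ⟨h4, h5⟩
            · rintro ⟨h3, h4⟩
              exact ⟨⟨by omega, h3⟩, h4⟩
          rw [hcard1, hBf, hMf]
          simp only [card_empty, Nat.sub_zero]
          exact hx x
        · have hMf : M'.filter (· < x) = M' := by
            apply filter_true_of_mem
            intro y hy
            have := M.le_max' y (mem_of_mem_erase hy)
            omega
          rw [hcard1, hMf, hM'c]
          by_cases hall : ∀ y ∈ B, y < x
          · have hBf : B.filter (· < x) = B := filter_true_of_mem hall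
            rw [hBf, hBc]
            have h5 : (s.filter (· < x)).card ≤ s.card := card_filter_le _ _
            omega
          · push_neg at hall
            obtain ⟨y₀, hy₀B, hy₀x⟩ := hall
            have hsub2 : s.filter (· < x) ⊆ (s.filter (· < m)) ∪ (B.filter (· < x)) := by
              intro z hz
              obtain ⟨hzs, hzx⟩ := mem_filter.1 hz
              rcases lt_or_ge z m with h | h
              · exact mem_union_left _ (mem_filter.2 ⟨hzs, h⟩)
              · refine mem_union_right _ (mem_filter.2 ⟨?_, hzx⟩)
                by_contra hzB
                have := run_split hzs h hzB hy₀B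
                omega
            have h6 := card_le_card hsub2
            have h7 := card_union_le (s.filter (· < m)) (B.filter (· < x))
            omega
      obtain ⟨P', hP'nc, hP'c, hP'min⟩ := ih s' M' (by omega) hM's' hs'c hx'
      have hBbot : B ≠ (⊥ : Finset ℕ) := by
        intro h
        rw [h] at hmB
        exact absurd hmB (notMem_empty m)
      have hdisj : Disjoint s' B := sdiff_disjoint
      have hsup : s' ⊔ B = s := sdiff_sup_cancel hBs
      refine ⟨P'.extend hBbot hdisj hsup, ?_, ?_, ?_⟩
      · intro a b c d hab hbc hcd B₁ hB₁ B₂ hB₂ ha hc hb hd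
        rw [Finpartition.extend_parts] at hB₁ hB₂
        rcases mem_insert.1 hB₁ with rfl | hB₁'
        · rcases mem_insert.1 hB₂ with h2 | hB₂'
          · rw [h2]
          · exfalso
            have hbs' : b ∈ s' := P'.le hB₂' hb
            have hbs : b ∈ s := (mem_sdiff.1 hbs').1
            have hbB : b ∉ B := (mem_sdiff.1 hbs').2
            have hma : m ≤ a := run_le ha
            exact hbB (run_interval hc hbs (by omega) (by omega))
        · rcases mem_insert.1 hB₂ with rfl | hB₂'
          · exfalso
            have hcs' : c ∈ s' := P'.le hB₁' hc
            have hcs : c ∈ s := (mem_sdiff.1 hcs').1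
            have hcB : c ∉ B := (mem_sdiff.1 hcs').2
            have hmb : m ≤ b := run_le hb
            exact hcB (run_interval hd hcs (by omega) (by omega))
          · exact hP'nc a b c d hab hbc hcd B₁ hB₁' B₂ hB₂' ha hc hb hd
      · intro C hC
        rw [Finpartition.extend_parts] at hC
        rcases mem_insert.1 hC with rfl | hC'
        · exact hBc
        · exact hP'c C hC'
      · rw [minima, Finpartition.extend_parts, image_insert]
        rw [show P'.parts.image mino = minima P' from rfl, hP'min]
        rw [mino_eq hmB hBmin, hM', insert_erase hmM]


open scoped Classical in
noncomputable def Vd (p n : ℕ) : Finset (Finset ℕ) :=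
  (Finset.Icc 1 (p * n)).powerset.filter fun M =>
    (Finset.Icc 1 (p * n)).card = p * M.card ∧
      ∀ x, ((Finset.Icc 1 (p * n)).filter (· < x)).card ≤ p * (M.filter (· < x)).card

lemma card_Icc_pn (p n : ℕ) : (Finset.Icc 1 (p * n)).card = p * n := by
  rw [Nat.card_Icc]
  omega

lemma mem_Vd {p n : ℕ} {M : Finset ℕ} : M ∈ Vd p n ↔
    M ⊆ Finset.Icc 1 (p * n) ∧ (Finset.Icc 1 (p * n)).card = p * M.card ∧
      ∀ x, ((Finset.Icc 1 (p * n)).filter (· < x)).card ≤ p * (M.filter (· < x)).card := by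
  simp only [Vd, mem_filter, mem_powerset, and_assoc]

lemma mem_okSet {p n : ℕ} {A : Finset ℕ} : A ∈ okSet p n ↔
    A ⊆ range (p * n + 1) ∧ A.card = n ∧ Ok p (p * n + 1) A := by
  simp only [okSet, mem_filter, mem_powersetCard, and_assoc]

lemma Icc_filter_lt (p n k : ℕ) (hk : k ≤ p * n) :
    (Finset.Icc 1 (p * n)).filter (· < k + 1) = Finset.Icc 1 k := by
  ext y
  simp only [mem_filter, mem_Icc]
  omega

/-- the bijection between subtype of partitions and `Vd` -/
lemma nat_card_eq_Vd (p n : ℕ) (hp : 0 < p) :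
    Nat.card {P : Finpartition (Finset.Icc 1 (p * n)) //
        IsNoncrossing P ∧ ∀ B ∈ P.parts, B.card = p} = (Vd p n).card := by
  have hmem : ∀ (P : {P : Finpartition (Finset.Icc 1 (p * n)) //
      IsNoncrossing P ∧ ∀ B ∈ P.parts, B.card = p}), minima P.1 ∈ Vd p n := by
    rintro ⟨P, hnc, hc⟩
    obtain ⟨h1, h2⟩ := minima_valid P hc
    rw [mem_Vd]
    exact ⟨minima_subset P, h1, h2⟩
  set f : {P : Finpartition (Finset.Icc 1 (p * n)) //
      IsNoncrossing P ∧ ∀ B ∈ P.parts, B.card = p} → {M // M ∈ Vd p n} :=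
    fun P => ⟨minima P.1, hmem P⟩ with hf
  have hinj : Function.Injective f := by
    rintro ⟨P, hPnc, hPc⟩ ⟨Q, hQnc, hQc⟩ h
    simp only [hf, Subtype.mk_eq_mk] at h
    exact Subtype.ext (eq_of_minima_eq hp (Finset.Icc 1 (p * n)).card _ le_rfl P Q
      hPnc hQnc hPc hQc h)
  have hsurj : Function.Surjective f := by
    rintro ⟨M, hM⟩
    rw [mem_Vd] at hM
    obtain ⟨hMs, h1, h2⟩ := hM
    obtain ⟨P, hPnc, hPc, hPmin⟩ := exists_partition hp M.card _ M le_rfl hMs h1 h2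
    exact ⟨⟨P, hPnc, hPc⟩, Subtype.ext hPmin⟩
  rw [Nat.card_congr (Equiv.ofBijective f ⟨hinj, hsurj⟩), Nat.card_eq_finsetCard]

lemma Vd_card_eq (p n : ℕ) (hp : 0 < p) : (Vd p n).card = (okSet p n).card := by
  apply card_bij' (i := fun M _ => M.image (· - 1)) (j := fun A _ => A.image (· + 1))
  · -- left inverse
    intro M hM
    rw [mem_Vd] at hM
    rw [image_image]
    have : ∀ x ∈ M, (x - 1 + 1) = x := by
      intro x hx
      have := mem_Icc.1 (hM.1 hx)
      omega
    calc M.image ((· + 1) ∘ (· - 1)) = M.image id := image_congr (fun x hx => this x hx)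
    _ = M := image_id
  · -- right inverse
    intro A hA
    rw [image_image]
    calc A.image ((· - 1) ∘ (· + 1)) = A.image id := image_congr (fun x _ => by simp)
    _ = A := image_id


  · -- maps into okSet
    intro M hM
    rw [mem_Vd] at hM
    obtain ⟨hMs, h1, h2⟩ := hM
    rw [card_Icc_pn] at h1
    have hMc : M.card = n := by
      have := Nat.eq_of_mul_eq_mul_left hp h1.symm
      omega
    have hM1 : ∀ x ∈ M, 1 ≤ x ∧ x ≤ p * n := by
      intro x hx
      exact mem_Icc.1 (hMs hx)
    have hinj : Set.InjOn (· - 1) M := by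
      intro a ha b hb hab
      have := hM1 a ha
      have := hM1 b hb
      simp only at hab
      omega
    rw [mem_okSet]
    refine ⟨?_, ?_, ?_⟩
    · intro y hy
      obtain ⟨x, hx, rfl⟩ := mem_image.1 hy
      have := hM1 x hx
      rw [mem_range]
      omega
    · rw [card_image_of_injOn hinj, hMc]
    · intro k hk
      rw [cnt_def]
      have hflt : (M.image (· - 1)).filter (· < k) = (M.filter (· < k + 1)).image (· - 1) := by
        rw [filter_image]
        congr 1
        apply filter_congr
        intro x hx
        have := hM1 x hx
        omega
      have hmono := hinj.mono (Finset.coe_subset.2 (filter_subset (· < k + 1) M))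
      rw [hflt, card_image_of_injOn hmono]
      have h3 := h2 (k + 1)
      rw [Icc_filter_lt p n k (by omega), Nat.card_Icc] at h3
      omega
  · -- maps back into Vd
    intro A hA
    rw [mem_okSet] at hA
    obtain ⟨hAs, hAc, hAok⟩ := hA
    have hAlt : ∀ a ∈ A, a < p * n := by
      have h0 := hAok (p * n) (by omega)
      rw [cnt_def] at h0
      have h4 : (A.filter (· < p * n)).card ≤ A.card := card_filter_le _ _
      have h5 : n ≤ (A.filter (· < p * n)).card := by
        rcases Nat.eq_zero_or_pos p with rfl | hp'
        · omega
        · have := Nat.le_of_mul_le_mul_left (by omega : p * n ≤ p * (A.filter (· < p * n)).card) hp'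
          exact this
      have h6 : A.filter (· < p * n) = A :=
        eq_of_subset_of_card_le (filter_subset _ _) (by omega)
      intro a ha
      rw [← h6] at ha
      exact (mem_filter.1 ha).2
    rw [mem_Vd]
    have himg : ∀ y ∈ A.image (· + 1), 1 ≤ y ∧ y ≤ p * n := by
      intro y hy
      obtain ⟨a, ha, rfl⟩ := mem_image.1 hy
      have := hAlt a ha
      omega
    refine ⟨?_, ?_, ?_⟩
    · intro y hy
      rw [mem_Icc]
      exact himg y hy
    · rw [card_Icc_pn, card_image_of_injective _ (add_left_injective 1), hAc]
    · intro x
      rcases Nat.eq_zero_or_pos x with rfl | hx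
      · simp
      obtain ⟨k, rfl⟩ : ∃ k, x = k + 1 := ⟨x - 1, by omega⟩
      have hflt : (A.image (· + 1)).filter (· < k + 1) = (A.filter (· < k)).image (· + 1) := by
        rw [filter_image]
        congr 1
        apply filter_congr
        intro a _
        omega
      rw [hflt, card_image_of_injective _ (add_left_injective 1)]
      rcases le_or_gt k (p * n) with hk | hk
      · rw [Icc_filter_lt p n k hk, Nat.card_Icc]
        rcases eq_or_lt_of_le hk with heq | hk'
        · have h6 : A.filter (· < k) = A := by
            apply filter_true_of_mem
            intro a ha
            have := hAlt a ha
            omega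
          rw [h6, hAc]
          omega
        · have := hAok k (by omega)
          rw [cnt_def] at this
          omega
      · have h6 : A.filter (· < k) = A := by
          apply filter_true_of_mem
          intro a ha
          have := hAlt a ha
          omega
        have h7 : (Finset.Icc 1 (p * n)).filter (· < k + 1) = Finset.Icc 1 (p * n) := by
          apply filter_true_of_mem
          intro y hy
          have := mem_Icc.1 hy
          omega
        rw [h6, h7, hAc, card_Icc_pn]


end FussCat

open FussCat in
theorem fussCatalan_counts_planar_p_partitions (p : ℕ) (hp : 0 < p) (n : ℕ) :
    Nat.card {P : Finpartition (Finset.Icc 1 (p * n)) //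
        IsNoncrossing P ∧ ∀ B ∈ P.parts, B.card = p} =
      (p * n + 1).choose n / (p * n + 1) := by
  rw [nat_card_eq_Vd p n hp, Vd_card_eq p n hp]
  symm
  apply Nat.div_eq_of_eq_mul_left (by omega)
  exact (okSet_card_mul p n hp).symm
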